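/- Let G be an additive subgroup of ℝ. Call an n-dimensional axis-parallel box good if at least one of its side lengths belongs to G. If a box is partitioned into finitely many good boxes, then the box itself is good. -/

import Mathlib

/-- An axis-parallel box in ℝⁿ with positive side lengths. -/
structure Box (n : ℕ) where
  lower : Fin n → ℝ
  upper : Fin n → ℝ
  lower_lt_upper : ∀ i, lower i < upper i

namespace Box

/-- The closed box as a subset of ℝⁿ. -/
def toSet {n : ℕ} (B : Box n) : Set (Fin n → ℝ) :=
  Set.univ.pi fun i => Set.Icc (B.lower i) (B.upper i)

/-- The open interior of the box. -/
def interiorSet {n : ℕ} (B : Box n) : Set (Fin n → ℝ) :=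
  Set.univ.pi fun i => Set.Ioo (B.lower i) (B.upper i)

/-- The side length of the box in direction `i`. -/
def side {n : ℕ} (B : Box n) (i : Fin n) : ℝ := B.upper i - B.lower i

end Box

/-- The boxes `t` form a finite partition (dissection) of `B`:
pairwise disjoint interiors, and their union covers `B`. -/
def IsDissection {n m : ℕ} (B : Box n) (t : Fin m → Box n) : Prop :=
  (∀ i j, i ≠ j → Disjoint (t i).interiorSet (t j).interiorSet) ∧
  (⋃ i, (t i).toSet) = B.toSet

/-- `P` is cut by a hyperplane parallel to a pair of its faces into `P₁` and `P₂`. -/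
def IsSplit {n : ℕ} (P P₁ P₂ : Box n) : Prop :=
  ∃ (j : Fin n) (c : ℝ), P.lower j < c ∧ c < P.upper j ∧
    P₁.lower = P.lower ∧ P₁.upper = Function.update P.upper j c ∧
    P₂.lower = Function.update P.lower j c ∧ P₂.upper = P.upper

/-- The corresponding `BoxIntegral` box. -/
def Box.toBI {n : ℕ} (B : Box n) : BoxIntegral.Box (Fin n) :=
  ⟨B.lower, B.upper, B.lower_lt_upper⟩

/-- A character of `ℝ` that kills `G` but not `a`. -/
lemma exists_char (G : AddSubgroup ℝ) (a : ℝ) (ha : a ∉ G) :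
    ∃ F : ℝ → Circle, (∀ x y, F (x + y) = F x * F y) ∧ (∀ g ∈ G, F g = 1) ∧ F a ≠ 1 := by
  have ha' : (QuotientAddGroup.mk a : ℝ ⧸ G) ≠ 0 := by
    simpa [QuotientAddGroup.eq_zero_iff] using ha
  obtain ⟨c, hc⟩ := CharacterModule.exists_character_apply_ne_zero_of_ne_zero ha'
  have hcomap : AddSubgroup.zmultiples (1 : ℚ) ≤
      (AddSubgroup.zmultiples (1 : ℝ)).comap (Rat.castHom ℝ).toAddMonoidHom := by
    rintro x ⟨k, rfl⟩
    exact ⟨k, by push_cast; simp⟩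
  let ρ : AddCircle (1 : ℚ) →+ AddCircle (1 : ℝ) :=
    QuotientAddGroup.map _ _ _ hcomap
  have hρ : ∀ x : AddCircle (1 : ℚ), ρ x = 0 → x = 0 := by
    intro x hx
    induction x using QuotientAddGroup.induction_on with
    | H q =>
      have hq : ((q : ℝ)) ∈ AddSubgroup.zmultiples (1 : ℝ) := by
        have : ρ (QuotientAddGroup.mk q) = QuotientAddGroup.mk ((q : ℝ)) := rfl
        rw [this] at hx
        exact (QuotientAddGroup.eq_zero_iff _).mp hx
      obtain ⟨k, hk⟩ := hq
      simp only [zsmul_eq_mul, mul_one] at hk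
      refine (QuotientAddGroup.eq_zero_iff _).mpr ⟨k, ?_⟩
      simp only [zsmul_eq_mul, mul_one]
      exact_mod_cast hk
  refine ⟨fun x => AddCircle.toCircle (ρ (c (QuotientAddGroup.mk x))), ?_, ?_, ?_⟩
  · intro x y
    show AddCircle.toCircle (ρ (c (QuotientAddGroup.mk (x + y))))
        = AddCircle.toCircle (ρ (c (QuotientAddGroup.mk x)))
          * AddCircle.toCircle (ρ (c (QuotientAddGroup.mk y)))
    have h0 : (QuotientAddGroup.mk (x + y) : ℝ ⧸ G)
        = QuotientAddGroup.mk x + QuotientAddGroup.mk y := rfl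
    rw [h0, map_add, map_add, AddCircle.toCircle_add]
  · intro g hg
    show AddCircle.toCircle (ρ (c (QuotientAddGroup.mk g))) = 1
    have h0 : (QuotientAddGroup.mk g : ℝ ⧸ G) = 0 := (QuotientAddGroup.eq_zero_iff _).mpr hg
    rw [h0, map_zero, map_zero, AddCircle.toCircle_zero]
  · intro h
    apply hc
    apply hρ
    apply AddCircle.injective_toCircle (one_ne_zero)
    show AddCircle.toCircle (ρ (c (QuotientAddGroup.mk a))) = AddCircle.toCircle 0
    rw [AddCircle.toCircle_zero]
    exact h

open BoxIntegral in
/-- The product "measure" attached to interval functions is box additive. -/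
lemma mu_boxAdditive {n : ℕ} (f : Fin n → ℝ → ℂ) :
    ∃ μ : BoxIntegral.BoxAdditiveMap (Fin n) ℂ ⊤,
      ∀ J, μ J = ∏ j, (f j (J.upper j) - f j (J.lower j)) := by
  classical
  refine ⟨BoxAdditiveMap.ofMapSplitAdd
    (fun J => ∏ j, (f j (J.upper j) - f j (J.lower j))) ⊤ ?_, fun J => rfl⟩
  intro I _ i x hx
  rw [Box.splitLower_def hx, Box.splitUpper_def hx]
  show (∏ j, (f j (Function.update I.upper i x j) - f j (I.lower j))) +
       (∏ j, (f j (I.upper j) - f j (Function.update I.lower i x j))) =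
       ∏ j, (f j (I.upper j) - f j (I.lower j))
  have h1 : ∀ P : Fin n → ℂ, ∏ j, P j = P i * ∏ j ∈ Finset.univ.erase i, P j :=
    fun P => (Finset.mul_prod_erase Finset.univ P (Finset.mem_univ i)).symm
  rw [h1, h1, h1]
  have e1 : (∏ j ∈ Finset.univ.erase i,
      (f j (Function.update I.upper i x j) - f j (I.lower j)))
      = ∏ j ∈ Finset.univ.erase i, (f j (I.upper j) - f j (I.lower j)) := by
    refine Finset.prod_congr rfl fun j hj => ?_
    rw [Function.update_of_ne (Finset.ne_of_mem_erase hj)]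
  have e2 : (∏ j ∈ Finset.univ.erase i,
      (f j (I.upper j) - f j (Function.update I.lower i x j)))
      = ∏ j ∈ Finset.univ.erase i, (f j (I.upper j) - f j (I.lower j)) := by
    refine Finset.prod_congr rfl fun j hj => ?_
    rw [Function.update_of_ne (Finset.ne_of_mem_erase hj)]
  rw [e1, e2]
  simp only [Function.update_self]
  ring

/-- If a box is partitioned into boxes each having a side length in the additive
subgroup `G`, then the box itself has a side length in `G`. -/
theorem good_box_theorem (n : ℕ) (G : AddSubgroup ℝ) (B : Box n)
    (m : ℕ) (t : Fin m → Box n) (ht : IsDissection B t)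
    (hgood : ∀ i, ∃ j, (t i).side j ∈ G) :
    ∃ j, B.side j ∈ G := by
  classical
  by_contra hcon
  push_neg at hcon
  choose F hFadd hFG hFne using fun j => exists_char G (B.side j) (hcon j)
  set f : Fin n → ℝ → ℂ := fun j x => ((F j x : ℂ)) with hfdef
  obtain ⟨μ, hμ⟩ := mu_boxAdditive f
  set tb : Fin m → BoxIntegral.Box (Fin n) := fun i => (t i).toBI with htb
  have hsub : ∀ i, (t i).toSet ⊆ B.toSet := by
    intro i
    rw [← ht.2]
    exact Set.subset_iUnion (fun i => (t i).toSet) i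
  have hbounds : ∀ i, (∀ k, B.lower k ≤ (t i).lower k) ∧
      (∀ k, (t i).upper k ≤ B.upper k) := by
    intro i
    have hl : (t i).lower ∈ (t i).toSet :=
      Set.mem_univ_pi.mpr fun k => ⟨le_refl _, ((t i).lower_lt_upper k).le⟩
    have hu : (t i).upper ∈ (t i).toSet :=
      Set.mem_univ_pi.mpr fun k => ⟨((t i).lower_lt_upper k).le, le_refl _⟩
    exact ⟨fun k => (Set.mem_univ_pi.mp (hsub i hl) k).1,
           fun k => (Set.mem_univ_pi.mp (hsub i hu) k).2⟩
  -- disjointness of the Ioc boxes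
  have hdisj : ∀ i j, i ≠ j → Disjoint ((tb i : Set (Fin n → ℝ))) (tb j : Set (Fin n → ℝ)) := by
    intro i j hij
    rw [Set.disjoint_left]
    intro x hxi hxj
    have hxi' : ∀ k, x k ∈ Set.Ioc ((t i).lower k) ((t i).upper k) := hxi
    have hxj' : ∀ k, x k ∈ Set.Ioc ((t j).lower k) ((t j).upper k) := hxj
    set z : Fin n → ℝ :=
      fun k => x k - min (x k - (t i).lower k) (x k - (t j).lower k) / 2 with hz
    have hminpos : ∀ k, 0 < min (x k - (t i).lower k) (x k - (t j).lower k) :=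
      fun k => lt_min (sub_pos.mpr (hxi' k).1) (sub_pos.mpr (hxj' k).1)
    have hzmem : ∀ a : Fin m, (∀ k, x k ∈ Set.Ioc ((t a).lower k) ((t a).upper k)) →
        (∀ k, min (x k - (t i).lower k) (x k - (t j).lower k) ≤ x k - (t a).lower k) →
        z ∈ (t a).interiorSet := by
      intro a hxa hge
      refine Set.mem_univ_pi.mpr fun k => ⟨?_, ?_⟩
      · have := hge k
        have := hminpos k
        simp only [hz]
        linarith
      · have h1 := (hxa k).2
        have := hminpos k
        simp only [hz]
        linarith
    exact Set.disjoint_left.mp (ht.1 i j hij)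
      (hzmem i hxi' fun k => min_le_left _ _)
      (hzmem j hxj' fun k => min_le_right _ _)
  -- covering
  have hcover : ∀ x ∈ B.toBI, ∃ i, x ∈ tb i := by
    intro x hx
    have hx' : ∀ k, x k ∈ Set.Ioc (B.lower k) (B.upper k) := hx
    set c : Fin n → ℝ := fun k => x k - B.lower k with hcdef
    have hcpos : ∀ k, 0 < c k := fun k => sub_pos.mpr (hx' k).1
    have hmem : ∀ N : ℕ, (fun k => x k - c k / (N + 2)) ∈ B.toSet := by
      intro N
      refine Set.mem_univ_pi.mpr fun k => ⟨?_, ?_⟩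
      · have h2 : c k / (N + 2) ≤ c k := by
          apply div_le_self (hcpos k).le
          have : (0 : ℝ) ≤ N := Nat.cast_nonneg N
          linarith
        have : B.lower k = x k - c k := by simp [hcdef]
        linarith
      · have h3 : 0 < c k / (N + 2) := by
          apply div_pos (hcpos k)
          have : (0 : ℝ) ≤ N := Nat.cast_nonneg N
          linarith
        have := (hx' k).2
        linarith
    have hex : ∀ N : ℕ, ∃ i, (fun k => x k - c k / (N + 2)) ∈ (t i).toSet := by
      intro N
      have h := hmem N
      rw [← ht.2] at h
      simpa using h
    choose g hg using hex
    obtain ⟨i, hi⟩ := Finite.exists_infinite_fiber g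
    have hSinf : (g ⁻¹' {i}).Infinite := Set.infinite_coe_iff.mp hi
    refine ⟨i, fun k => ⟨?_, ?_⟩⟩
    · obtain ⟨N, hN⟩ := hSinf.nonempty
      have hgN : g N = i := hN
      have h1 := (Set.mem_univ_pi.mp (hg N) k).1
      rw [hgN] at h1
      have h3 : 0 < c k / (N + 2) := by
        apply div_pos (hcpos k)
        have : (0 : ℝ) ≤ N := Nat.cast_nonneg N
        linarith
      calc (tb i).lower k ≤ x k - c k / (N + 2) := h1
        _ < x k := by linarith
    · refine le_of_forall_pos_le_add fun ε hε => ?_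
      obtain ⟨M, hM⟩ := exists_nat_gt (c k / ε)
      obtain ⟨N, hNS, hNM⟩ := hSinf.exists_gt M
      have hgN : g N = i := hNS
      have h1 := (Set.mem_univ_pi.mp (hg N) k).2
      rw [hgN] at h1
      have h2 : c k / (N + 2) < ε := by
        rw [div_lt_iff₀ (by positivity)]
        have hMN : (M : ℝ) < N := by exact_mod_cast hNM
        have : c k / ε < (N : ℝ) + 2 := by linarith
        calc c k = (c k / ε) * ε := by field_simp
          _ < ((N : ℝ) + 2) * ε := by
            apply mul_lt_mul_of_pos_right this hε
          _ = ε * ((N : ℝ) + 2) := by ring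
      calc x k = (x k - c k / (N + 2)) + c k / (N + 2) := by ring
        _ ≤ (tb i).upper k + ε := by
            apply add_le_add h1 h2.le
  set π : BoxIntegral.Prepartition B.toBI :=
    { boxes := Finset.univ.image tb
      le_of_mem' := by
        intro J hJ
        obtain ⟨i, -, rfl⟩ := Finset.mem_image.mp hJ
        exact BoxIntegral.Box.le_iff_bounds.mpr ⟨(hbounds i).1, (hbounds i).2⟩
      pairwiseDisjoint := by
        intro J₁ hJ₁ J₂ hJ₂ hne
        obtain ⟨i, -, rfl⟩ := Finset.mem_image.mp (Finset.mem_coe.mp hJ₁)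
        obtain ⟨j, -, rfl⟩ := Finset.mem_image.mp (Finset.mem_coe.mp hJ₂)
        exact hdisj i j fun h => hne (by rw [h]) } with hπdef
  have hπ : π.IsPartition := by
    intro x hx
    obtain ⟨i, hi⟩ := hcover x hx
    exact ⟨tb i, Finset.mem_image_of_mem tb (Finset.mem_univ i), hi⟩
  have hsum := μ.sum_partition_boxes le_top hπ
  have hzero : ∀ J ∈ π.boxes, μ J = 0 := by
    intro J hJ
    obtain ⟨i, -, rfl⟩ := Finset.mem_image.mp hJ
    obtain ⟨jj, hjj⟩ := hgood i
    rw [hμ]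
    apply Finset.prod_eq_zero (Finset.mem_univ jj)
    have hup : (t i).upper jj = (t i).lower jj + (t i).side jj := by
      simp [Box.side]
    have hF1 : F jj ((t i).side jj) = 1 := hFG jj _ hjj
    have hFeq : F jj ((t i).upper jj) = F jj ((t i).lower jj) := by
      rw [hup, hFadd, hF1, mul_one]
    have : (tb i).upper = (t i).upper := rfl
    simp only [hfdef, htb]
    show ((F jj ((t i).toBI.upper jj) : ℂ)) - ((F jj ((t i).toBI.lower jj) : ℂ)) = 0
    have : (t i).toBI.upper = (t i).upper := rfl
    rw [this]
    have : (t i).toBI.lower = (t i).lower := rfl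
    rw [this, hFeq, sub_self]
  rw [Finset.sum_eq_zero hzero] at hsum
  have hprod : (∏ j, (f j (B.toBI.upper j) - f j (B.toBI.lower j))) = 0 := by
    rw [← hμ]; exact hsum.symm
  obtain ⟨j, -, hj⟩ := Finset.prod_eq_zero_iff.mp hprod
  have hco : F j (B.upper j) = F j (B.lower j) := by
    apply Circle.coe_injective
    have h1 : B.toBI.upper = B.upper := rfl
    have h2 : B.toBI.lower = B.lower := rfl
    rw [h1, h2] at hj
    simpa [hfdef, sub_eq_zero] using hj
  apply hFne j
  have hupB : B.upper j = B.lower j + B.side j := by simp [Box.side]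
  have : F j (B.lower j) * F j (B.side j) = F j (B.lower j) * 1 := by
    rw [mul_one, ← hFadd, ← hupB, hco]
  exact mul_left_cancel this
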